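/- Let F be a field and A a locally matrix algebra over F. Then the inner derivations are dense in the Lie algebra of all derivations of A in the Tykhonoff (pointwise-convergence) topology; concretely: for every derivation d of A and every finite list of elements a_1, …, a_n ∈ A there exists an element b ∈ A such that d(a_i) = b·a_i − a_i·b for all i = 1, …, n. -/

import Mathlib

private lemma sum_diag_stdBasis (n : ℕ) (F : Type*) [Field F] :
    ∑ i : Fin n, Matrix.single i i (1 : F) = 1 := by
  ext a b
  rw [Matrix.sum_apply]
  rcases eq_or_ne a b with rfl | h
  · simp [Matrix.single, Matrix.one_apply, Finset.sum_ite_eq]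
  · rw [Finset.sum_eq_zero, Matrix.one_apply_ne h]
    intro i _
    exact Matrix.single_apply_of_ne _ _ _ _ _ (by rintro ⟨rfl, rfl⟩; exact h rfl)



/-- A (not necessarily unital) associative algebra `A` over a field `F` is a *locally matrix
algebra* if every finite subset of `A` is contained in a subalgebra of `A` that is isomorphic
to a matrix algebra `Mₙ(F)` for some `n ≥ 1`. -/
def IsLocallyMatrix (F A : Type*) [Field F] [NonUnitalRing A] [Module F A]
    [SMulCommClass F A A] [IsScalarTower F A A] : Prop :=
  ∀ s : Finset A, ∃ (B : NonUnitalSubalgebra F A) (n : ℕ), 0 < n ∧ (s : Set A) ⊆ (B : Set A) ∧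
    ∃ f : B →ₙₐ[F] Matrix (Fin n) (Fin n) F, Function.Bijective f

/-- **Inner derivations are dense in the derivations** (Theorem 1(1)): if `A` is a locally
matrix algebra over a field `F`, then for every derivation `d` of `A` and every finite list of
elements of `A` there is an element `b ∈ A` such that `d` agrees with `ad(b) : x ↦ b*x - x*b`
on these elements. -/
theorem innerDerivations_dense (F A : Type*) [Field F] [NonUnitalRing A] [Module F A]
    [SMulCommClass F A A] [IsScalarTower F A A] (hA : IsLocallyMatrix F A)
    (d : A →ₗ[F] A) (hd : ∀ x y : A, d (x * y) = d x * y + x * d y)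
    (s : Finset A) :
    ∃ b : A, ∀ a ∈ s, d a = b * a - a * b := by
  obtain ⟨B, n, hn, hsB, f, hf⟩ := hA s
  haveI : Nonempty B := ⟨0⟩
  set g : Matrix (Fin n) (Fin n) F → B := Function.invFun f with hgdef
  have hfg : ∀ m, f (g m) = m := fun m => Function.invFun_eq (hf.2 m)
  have hgf : ∀ b, g (f b) = b := fun b => hf.1 (by rw [hfg])
  have hgmul : ∀ m m', g (m * m') = g m * g m' := fun m m' =>
    hf.1 (by rw [hfg, map_mul, hfg, hfg])
  have hgadd : ∀ m m', g (m + m') = g m + g m' := fun m m' =>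
    hf.1 (by rw [hfg, map_add, hfg, hfg])
  have hgsmul : ∀ (c : F) m, g (c • m) = c • g m := fun c m =>
    hf.1 (by rw [hfg, map_smul, hfg])
  have hgzero : g 0 = 0 := hf.1 (by rw [hfg, map_zero])
  set gL : Matrix (Fin n) (Fin n) F →ₗ[F] B :=
    { toFun := g, map_add' := hgadd, map_smul' := hgsmul } with hgL
  set i0 : Fin n := ⟨0, hn⟩ with hi0
  set E : Fin n → Fin n → A := fun i j => (g (Matrix.single i j (1:F)) : A) with hE
  set e : A := (g 1 : A) with he
  -- multiplication rules for the matrix units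
  have hEE : ∀ i j k l : Fin n, E i j * E k l = if j = k then E i l else 0 := by
    intro i j k l
    show ((g _ : B) : A) * ((g _ : B) : A) = _
    rw [← MulMemClass.coe_mul, ← hgmul]
    rcases eq_or_ne j k with rfl | h
    · rw [Matrix.single_mul_single_same, one_mul, if_pos rfl]
    · rw [Matrix.single_mul_single_of_ne (h := h), hgzero, if_neg h]; exact ZeroMemClass.coe_zero B
  -- e is a unit for B
  have heBl : ∀ a : B, e * (a : A) = a := fun a => by
    rw [he, ← MulMemClass.coe_mul]
    congr 1
    exact hf.1 (by rw [map_mul, hfg, one_mul])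
  have heBr : ∀ a : B, (a : A) * e = a := fun a => by
    rw [he, ← MulMemClass.coe_mul]
    congr 1
    exact hf.1 (by rw [map_mul, hfg, mul_one])
  have hee : e * e = e := heBl (g 1)
  have heE : ∀ i j, e * E i j = E i j := fun i j => heBl _
  have hEe : ∀ i j, E i j * e = E i j := fun i j => heBr _
  have heSum : ∑ i : Fin n, E i i = e := by
    rw [he, hE]
    calc ∑ i : Fin n, ((g (Matrix.single i i (1:F)) : B) : A)
        = ((∑ i : Fin n, gL (Matrix.single i i (1:F)) : B) : A) := by
          push_cast; rfl
      _ = ((g 1 : B) : A) := by rw [← map_sum, sum_diag_stdBasis]; rfl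
  -- every element of B is in the span of the matrix units
  have hspan : ∀ a : B, (a : A) ∈
      Submodule.span F (Set.range fun p : Fin n × Fin n => E p.1 p.2) := by
    intro a
    have hrep : (a : A) = ∑ i : Fin n, ∑ j : Fin n, (f a i j) • E i j := by
      have h1 : f a = ∑ i : Fin n, ∑ j : Fin n, (f a i j) • Matrix.single i j (1:F) := by
        simp only [Matrix.smul_single, smul_eq_mul, mul_one]
        exact Matrix.matrix_eq_sum_single (f a)
      have h2 : a = ∑ i : Fin n, ∑ j : Fin n, (f a i j) • gL (Matrix.single i j (1:F)) := by
        conv_lhs => rw [← hgf a, h1]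
        show gL (∑ i : Fin n, ∑ j : Fin n, (f a i j) • Matrix.single i j (1:F)) = _
        simp only [map_sum, map_smul]
      calc (a : A) = ((∑ i : Fin n, ∑ j : Fin n,
            (f a i j) • gL (Matrix.single i j (1:F)) : B) : A) := by rw [← h2]
        _ = ∑ i : Fin n, ∑ j : Fin n, (f a i j) • E i j := by push_cast; rfl
    rw [hrep]
    exact Submodule.sum_mem _ fun i _ => Submodule.sum_mem _ fun j _ =>
      Submodule.smul_mem _ _ (Submodule.subset_span ⟨(i, j), rfl⟩)
  -- the "corner" map D : x ↦ e * (d x * e) is a derivation on B with values in A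
  have hD : ∀ x y : A, e * x = x → x * e = x → e * y = y → y * e = y →
      e * (d (x * y) * e) = (e * (d x * e)) * y + x * (e * (d y * e)) := by
    intro x y hex hxe hey hye
    rw [hd x y, add_mul, mul_add]
    congr 1
    · rw [mul_assoc (d x) y e, hye, ← hey, ← mul_assoc (d x) e y,
        ← mul_assoc e (d x * e) y, hey]
    · rw [mul_assoc x (d y) e, ← mul_assoc e x (d y * e), hex, ← hxe,
        mul_assoc x e (d y * e), hxe]
  have hDe : ∀ x : A, (e * (d x * e)) * e = e * (d x * e) := fun x => by
    rw [mul_assoc e (d x * e) e, mul_assoc (d x) e e, hee]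
  set b0 : A := ∑ i : Fin n, (e * (d (E i i0) * e)) * E i0 i with hb0
  have hkey : ∀ j k : Fin n, e * (d (E j k) * e) = b0 * E j k - E j k * b0 := by
    intro j k
    have hl : b0 * E j k = (e * (d (E j i0) * e)) * E i0 k := by
      have hterm : ∀ i : Fin n, ((e * (d (E i i0) * e)) * E i0 i) * E j k
          = if i = j then (e * (d (E j i0) * e)) * E i0 k else 0 := by
        intro i
        rw [mul_assoc, hEE i0 i j k]
        rcases eq_or_ne i j with rfl | h
        · rw [if_pos rfl, if_pos rfl]
        · rw [if_neg h, if_neg h, mul_zero]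
      rw [hb0, Finset.sum_mul, Finset.sum_congr rfl fun i _ => hterm i,
        Finset.sum_ite_eq' Finset.univ j, if_pos (Finset.mem_univ j)]
    have hr : E j k * b0 = (e * (d (E j i0) * e)) * E i0 k - e * (d (E j k) * e) := by
      have hterm : ∀ i : Fin n, E j k * ((e * (d (E i i0) * e)) * E i0 i)
          = (if i = k then (e * (d (E j i0) * e)) * E i0 k else 0)
            - (e * (d (E j k) * e)) * E i i := by
        intro i
        have hleib := hD (E j k) (E i i0) (heE j k) (hEe j k) (heE i i0) (hEe i i0)
        have h2 : E j k * (e * (d (E i i0) * e))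
            = e * (d (E j k * E i i0) * e) - (e * (d (E j k) * e)) * E i i0 := by
          rw [eq_sub_iff_add_eq, add_comm]
          exact hleib.symm
        rw [← mul_assoc, h2, sub_mul, mul_assoc (e * (d (E j k) * e)) (E i i0) (E i0 i),
          hEE i i0 i0 i, if_pos rfl, hEE j k i i0]
        rcases eq_or_ne i k with rfl | h
        · rw [if_pos rfl, if_pos rfl]
        · rw [if_neg (fun hh => h hh.symm), if_neg h, map_zero, zero_mul, mul_zero, zero_mul]
      calc E j k * b0 = ∑ i : Fin n, E j k * ((e * (d (E i i0) * e)) * E i0 i) := by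
            rw [hb0, Finset.mul_sum]
        _ = ∑ i : Fin n, ((if i = k then (e * (d (E j i0) * e)) * E i0 k else 0)
              - (e * (d (E j k) * e)) * E i i) := Finset.sum_congr rfl fun i _ => hterm i
        _ = (∑ i : Fin n, if i = k then (e * (d (E j i0) * e)) * E i0 k else 0)
              - ∑ i : Fin n, (e * (d (E j k) * e)) * E i i := Finset.sum_sub_distrib _ _
        _ = (e * (d (E j i0) * e)) * E i0 k - e * (d (E j k) * e) := by
            rw [Finset.sum_ite_eq' Finset.univ k, if_pos (Finset.mem_univ k),
              ← Finset.mul_sum, heSum, hDe]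
    rw [hl, hr, sub_sub_cancel]
  -- extend to all of B by linearity
  have hDB : ∀ a : B, e * (d (a : A) * e) = b0 * (a : A) - (a : A) * b0 := by
    intro a
    set L1 : A →ₗ[F] A := (LinearMap.mulLeft F e).comp ((LinearMap.mulRight F e).comp d)
      with hL1
    set L2 : A →ₗ[F] A := LinearMap.mulLeft F b0 - LinearMap.mulRight F b0 with hL2
    have h1 : Set.EqOn L1 L2 (Set.range fun p : Fin n × Fin n => E p.1 p.2) := by
      rintro x ⟨⟨i, j⟩, rfl⟩
      show L1 (E i j) = L2 (E i j)
      rw [hL1, hL2]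
      simpa using hkey i j
    have h2 := LinearMap.eqOn_span (f := L1) (g := L2) h1 (hspan a)
    rw [hL1, hL2] at h2
    simpa using h2
  -- final assembly
  refine ⟨b0 + d e * e - e * d e, fun a ha => ?_⟩
  have haB : a ∈ B := hsB ha
  have hea : e * a = a := heBl ⟨a, haB⟩
  have hae : a * e = a := heBr ⟨a, haB⟩
  have hDa : e * (d a * e) = b0 * a - a * b0 := hDB ⟨a, haB⟩
  have hde : d e = d e * e + e * d e := by
    nth_rewrite 1 [← hee]
    rw [hd]
  have h1 : (e * d e) * a = 0 := by
    have h1' : e * d e = d e - d e * e := by rw [eq_sub_iff_add_eq, add_comm, ← hde]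
    rw [h1', sub_mul, mul_assoc, hea, sub_self]
  have h2 : a * (d e * e) = 0 := by
    have h2' : d e * e = d e - e * d e := by rw [eq_sub_iff_add_eq, ← hde]
    rw [h2', mul_sub, ← mul_assoc, hae, sub_self]
  have e1 : e * d a = d a - d e * a := by
    rw [eq_sub_iff_add_eq, add_comm, ← hd, hea]
  have e2 : d a * e = d a - a * d e := by
    rw [eq_sub_iff_add_eq, ← hd, hae]
  have hDa2 : e * (d a * e) = d a - d e * a - a * d e := by
    rw [e2, mul_sub, e1, ← mul_assoc, hea]
  have hfin : d a = b0 * a - a * b0 + d e * a + a * d e := by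
    have h := hDa.symm.trans hDa2
    rw [h]; abel
  rw [sub_mul, add_mul, mul_sub, mul_add,
    mul_assoc (d e) e a, hea, ← mul_assoc a e (d e), hae, h1, h2, hfin]
  abel
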